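/- For every natural number i ≥ 1, with ψ = Fᵢ₊₁² + Fᵢ₊₂² and δ = Fᵢ·Fᵢ₊₃, 3 divides the integer 2·Fᵢ₊₁·Fᵢ₊₂·((-ψ + δ)³ - (-ψ - δ)³). -/
import Mathlib

lemma three_dvd_fib_prod (i : ℕ) :
    (3 : ℕ) ∣ Nat.fib i * Nat.fib (i + 1) * Nat.fib (i + 2) * Nat.fib (i + 3) := by
  have key : ∃ j, j ≤ 3 ∧ 4 ∣ (i + j) := by
    have h := Nat.mod_lt i (show 0 < 4 by norm_num)
    have hm : i % 4 = 0 ∨ i % 4 = 1 ∨ i % 4 = 2 ∨ i % 4 = 3 := by omega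
    rcases hm with h0 | h0 | h0 | h0
    · exact ⟨0, by norm_num, by omega⟩
    · exact ⟨3, by norm_num, by omega⟩
    · exact ⟨2, by norm_num, by omega⟩
    · exact ⟨1, by norm_num, by omega⟩
  obtain ⟨j, hj, hdvd⟩ := key
  have h3 : (3 : ℕ) = Nat.fib 4 := by norm_num [Nat.fib]
  have hfib : Nat.fib 4 ∣ Nat.fib (i + j) := Nat.fib_dvd 4 (i + j) hdvd
  rw [h3]
  refine dvd_trans hfib ?_
  interval_cases j
  · exact Dvd.dvd.mul_right (Dvd.dvd.mul_right (Dvd.dvd.mul_right dvd_rfl _) _) _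
  · exact Dvd.dvd.mul_right (Dvd.dvd.mul_right (Dvd.dvd.mul_left dvd_rfl _) _) _
  · exact Dvd.dvd.mul_right (Dvd.dvd.mul_left dvd_rfl _) _
  · exact Dvd.dvd.mul_left dvd_rfl _

theorem three_dvd_leading_term_g (i : ℕ) (hi : 1 ≤ i) :
    (3 : ℤ) ∣ 2 * (Nat.fib (i + 1) : ℤ) * Nat.fib (i + 2) *
      ((-((Nat.fib (i + 1) : ℤ) ^ 2 + (Nat.fib (i + 2) : ℤ) ^ 2) + (Nat.fib i : ℤ) * Nat.fib (i + 3)) ^ 3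
        - (-((Nat.fib (i + 1) : ℤ) ^ 2 + (Nat.fib (i + 2) : ℤ) ^ 2) - (Nat.fib i : ℤ) * Nat.fib (i + 3)) ^ 3) := by
  have hP : (3 : ℤ) ∣ (Nat.fib i : ℤ) * Nat.fib (i + 1) * Nat.fib (i + 2) * Nat.fib (i + 3) := by
    have := three_dvd_fib_prod i
    exact_mod_cast Int.natCast_dvd_natCast.mpr this
  obtain ⟨k, hk⟩ := hP
  set a := (Nat.fib i : ℤ)
  set b := (Nat.fib (i + 1) : ℤ)
  set c := (Nat.fib (i + 2) : ℤ)
  set d := (Nat.fib (i + 3) : ℤ)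
  refine ⟨4 * (a * d) ^ 2 * k + 4 * b * c * (b ^ 2 + c ^ 2) ^ 2 * (a * d), ?_⟩
  linear_combination (4 * (a * d) ^ 2) * hk
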